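/- Derivability of the deep game-monotonicity principle in HilbFull: for every L_NF-formula context ψ(−) with a unique game-position hole, every game δ ∈ G_NF and every formula χ ∈ L_NF, HilbFull ⊢ ψ(δ) → ψ(χ! ; δ), where ψ(δ) denotes the result of filling the hole with δ (formulas viewed in L_Full via the inclusion of L_NF into L_Full). -/
import Mathlib


/-! Normal-form game logic: syntax -/

mutual
inductive GLForm : Type where
  | atom  : ℕ → GLForm
  | natom : ℕ → GLForm
  | or    : GLForm → GLForm → GLForm
  | and   : GLForm → GLForm → GLForm
  | dia   : GLGame → GLForm → GLForm
inductive GLGame : Type where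
  | atg   : ℕ → GLGame
  | atgd  : ℕ → GLGame
  | comp  : GLGame → GLGame → GLGame
  | cha   : GLGame → GLGame → GLGame
  | chd   : GLGame → GLGame → GLGame
  | star  : GLGame → GLGame
  | cross : GLGame → GLGame
  | test  : GLForm → GLGame
  | dtest : GLForm → GLGame
end

noncomputable instance : DecidableEq GLForm := Classical.decEq _
noncomputable instance : DecidableEq GLGame := Classical.decEq _

/-! Formula contexts for game logic: a context is a formula (resp. game) with a
    unique occurrence of a hole, which sits either in formula position or in game
    position.  `fill` substitutes the hole. -/

mutual
/-- Formula context with a unique formula-position hole. -/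
inductive FCtxF : Type where
  | hole : FCtxF
  | orL  : FCtxF → GLForm → FCtxF
  | orR  : GLForm → FCtxF → FCtxF
  | andL : FCtxF → GLForm → FCtxF
  | andR : GLForm → FCtxF → FCtxF
  | diaG : GCtxF → GLForm → FCtxF
  | diaF : GLGame → FCtxF → FCtxF
/-- Game context with a unique formula-position hole. -/
inductive GCtxF : Type where
  | compL : GCtxF → GLGame → GCtxF
  | compR : GLGame → GCtxF → GCtxF
  | chaL  : GCtxF → GLGame → GCtxF
  | chaR  : GLGame → GCtxF → GCtxF
  | chdL  : GCtxF → GLGame → GCtxF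
  | chdR  : GLGame → GCtxF → GCtxF
  | star  : GCtxF → GCtxF
  | cross : GCtxF → GCtxF
  | test  : FCtxF → GCtxF
  | dtest : FCtxF → GCtxF
end

mutual
/-- Formula context with a unique game-position hole. -/
inductive FCtxG : Type where
  | orL  : FCtxG → GLForm → FCtxG
  | orR  : GLForm → FCtxG → FCtxG
  | andL : FCtxG → GLForm → FCtxG
  | andR : GLForm → FCtxG → FCtxG
  | diaG : GCtxG → GLForm → FCtxG
  | diaF : GLGame → FCtxG → FCtxG
/-- Game context with a unique game-position hole. -/
inductive GCtxG : Type where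
  | hole  : GCtxG
  | compL : GCtxG → GLGame → GCtxG
  | compR : GLGame → GCtxG → GCtxG
  | chaL  : GCtxG → GLGame → GCtxG
  | chaR  : GLGame → GCtxG → GCtxG
  | chdL  : GCtxG → GLGame → GCtxG
  | chdR  : GLGame → GCtxG → GCtxG
  | star  : GCtxG → GCtxG
  | cross : GCtxG → GCtxG
  | test  : FCtxG → GCtxG
  | dtest : FCtxG → GCtxG
end

mutual
def FCtxF.fill : FCtxF → GLForm → GLForm
  | .hole, χ => χ
  | .orL c ψ, χ => .or (FCtxF.fill c χ) ψ
  | .orR φ c, χ => .or φ (FCtxF.fill c χ)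
  | .andL c ψ, χ => .and (FCtxF.fill c χ) ψ
  | .andR φ c, χ => .and φ (FCtxF.fill c χ)
  | .diaG c φ, χ => .dia (GCtxF.fill c χ) φ
  | .diaF γ c, χ => .dia γ (FCtxF.fill c χ)
def GCtxF.fill : GCtxF → GLForm → GLGame
  | .compL c δ, χ => .comp (GCtxF.fill c χ) δ
  | .compR γ c, χ => .comp γ (GCtxF.fill c χ)
  | .chaL c δ, χ => .cha (GCtxF.fill c χ) δ
  | .chaR γ c, χ => .cha γ (GCtxF.fill c χ)
  | .chdL c δ, χ => .chd (GCtxF.fill c χ) δ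
  | .chdR γ c, χ => .chd γ (GCtxF.fill c χ)
  | .star c, χ => .star (GCtxF.fill c χ)
  | .cross c, χ => .cross (GCtxF.fill c χ)
  | .test c, χ => .test (FCtxF.fill c χ)
  | .dtest c, χ => .dtest (FCtxF.fill c χ)
end

mutual
def FCtxG.fillG : FCtxG → GLGame → GLForm
  | .orL c ψ, δ => .or (FCtxG.fillG c δ) ψ
  | .orR φ c, δ => .or φ (FCtxG.fillG c δ)
  | .andL c ψ, δ => .and (FCtxG.fillG c δ) ψ
  | .andR φ c, δ => .and φ (FCtxG.fillG c δ)
  | .diaG c φ, δ => .dia (GCtxG.fillG c δ) φ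
  | .diaF γ c, δ => .dia γ (FCtxG.fillG c δ)
def GCtxG.fillG : GCtxG → GLGame → GLGame
  | .hole, δ => δ
  | .compL c δ', δ => .comp (GCtxG.fillG c δ) δ'
  | .compR γ c, δ => .comp γ (GCtxG.fillG c δ)
  | .chaL c δ', δ => .cha (GCtxG.fillG c δ) δ'
  | .chaR γ c, δ => .cha γ (GCtxG.fillG c δ)
  | .chdL c δ', δ => .chd (GCtxG.fillG c δ) δ'
  | .chdR γ c, δ => .chd γ (GCtxG.fillG c δ)
  | .star c, δ => .star (GCtxG.fillG c δ)
  | .cross c, δ => .cross (GCtxG.fillG c δ)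
  | .test c, δ => .test (FCtxG.fillG c δ)
  | .dtest c, δ => .dtest (FCtxG.fillG c δ)
end

/-! The full language of game logic: syntax, abbreviations, propositional
    tautologies, and the Hilbert system HilbFull. -/

mutual
inductive FullForm : Type where
  | atom : ℕ → FullForm
  | neg  : FullForm → FullForm
  | or   : FullForm → FullForm → FullForm
  | dia  : FullGame → FullForm → FullForm
inductive FullGame : Type where
  | atg   : ℕ → FullGame
  | comp  : FullGame → FullGame → FullGame
  | cha   : FullGame → FullGame → FullGame
  | chd   : FullGame → FullGame → FullGame
  | star  : FullGame → FullGame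
  | cross : FullGame → FullGame
  | dual  : FullGame → FullGame
  | test  : FullForm → FullGame
  | dtest : FullForm → FullGame
end

/-- Implication, as the usual abbreviation. -/
def fimp (φ ψ : FullForm) : FullForm := .or (.neg φ) ψ
/-- Conjunction, as the usual abbreviation. -/
def fand (φ ψ : FullForm) : FullForm := .neg (.or (.neg φ) (.neg ψ))
/-- Bi-implication, as the usual abbreviation. -/
def fiff (φ ψ : FullForm) : FullForm := fand (fimp φ ψ) (fimp ψ φ)

/-- Propositional evaluation of a formula relative to an arbitrary assignment of
    truth values to its non-Boolean components. -/
def fpeval (v : FullForm → Prop) : FullForm → Prop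
  | .atom p  => v (.atom p)
  | .neg φ   => ¬ fpeval v φ
  | .or φ ψ  => fpeval v φ ∨ fpeval v ψ
  | .dia γ φ => v (.dia γ φ)

/-- `φ` is (a substitution instance of) a propositional tautology. -/
def FTaut (φ : FullForm) : Prop := ∀ v, fpeval v φ

/-- The Hilbert system HilbFull for the full language of game logic. -/
inductive HilbFull : FullForm → Prop
  | taut {φ} : FTaut φ → HilbFull φ
  | axComp {γ δ φ} : HilbFull (fiff (.dia (.comp γ δ) φ) (.dia γ (.dia δ φ)))
  | axCha {γ δ φ} : HilbFull (fiff (.dia (.cha γ δ) φ) (.or (.dia γ φ) (.dia δ φ)))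
  | axStar {γ φ} : HilbFull (fiff (.dia (.star γ) φ) (.or φ (.dia γ (.dia (.star γ) φ))))
  | axTest {ψ φ} : HilbFull (fiff (.dia (.test ψ) φ) (fand ψ φ))
  | axDual {γ φ} : HilbFull (fiff (.dia (.dual γ) φ) (.neg (.dia γ (.neg φ))))
  | axChd {γ δ φ} : HilbFull (fiff (.dia (.chd γ δ) φ) (fand (.dia γ φ) (.dia δ φ)))
  | axCross {γ φ} : HilbFull (fiff (.dia (.cross γ) φ) (fand φ (.dia γ (.dia (.cross γ) φ))))
  | axDtest {ψ φ} : HilbFull (fiff (.dia (.dtest ψ) φ) (.or ψ φ))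
  | mp {φ ψ} : HilbFull φ → HilbFull (fimp φ ψ) → HilbFull ψ
  | mon {φ ψ} (γ) : HilbFull (fimp φ ψ) → HilbFull (fimp (.dia γ φ) (.dia γ ψ))
  | barInd {γ φ} : HilbFull (fimp (.dia γ φ) φ) → HilbFull (fimp (.dia (.star γ) φ) φ)
  | barIndCross {γ φ} : HilbFull (fimp φ (.dia γ φ)) → HilbFull (fimp φ (.dia (.cross γ) φ))

/-! The embedding of the normal-form language into the full language. -/

mutual
def GLForm.toFull : GLForm → FullForm
  | .atom p  => .atom p
  | .natom p => .neg (.atom p)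
  | .or φ ψ  => .or (GLForm.toFull φ) (GLForm.toFull ψ)
  | .and φ ψ => fand (GLForm.toFull φ) (GLForm.toFull ψ)
  | .dia γ φ => .dia (GLGame.toFull γ) (GLForm.toFull φ)
def GLGame.toFull : GLGame → FullGame
  | .atg g  => .atg g
  | .atgd g => .dual (.atg g)
  | .comp γ δ => .comp (GLGame.toFull γ) (GLGame.toFull δ)
  | .cha γ δ  => .cha (GLGame.toFull γ) (GLGame.toFull δ)
  | .chd γ δ  => .chd (GLGame.toFull γ) (GLGame.toFull δ)
  | .star γ  => .star (GLGame.toFull γ)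
  | .cross γ => .cross (GLGame.toFull γ)
  | .test φ  => .test (GLForm.toFull φ)
  | .dtest φ => .dtest (GLForm.toFull φ)
end

/-! Auxiliary propositional toolkit. -/

lemma hmp1 {A B : FullForm} (t : FTaut (fimp A B)) (h : HilbFull A) : HilbFull B :=
  h.mp (.taut t)

lemma hmp2 {A B C : FullForm} (t : FTaut (fimp A (fimp B C)))
    (hA : HilbFull A) (hB : HilbFull B) : HilbFull C :=
  hB.mp (hA.mp (.taut t))

lemma iffl {A B : FullForm} (h : HilbFull (fiff A B)) : HilbFull (fimp A B) :=
  hmp1 (by intro v; simp [fpeval, fimp, fand, fiff]; tauto) h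

lemma iffr {A B : FullForm} (h : HilbFull (fiff A B)) : HilbFull (fimp B A) :=
  hmp1 (by intro v; simp [fpeval, fimp, fand, fiff]; tauto) h

lemma himp_trans {A B C : FullForm} (h1 : HilbFull (fimp A B)) (h2 : HilbFull (fimp B C)) :
    HilbFull (fimp A C) :=
  hmp2 (by intro v; simp [fpeval, fimp]; tauto) h1 h2

lemma himp_id (A : FullForm) : HilbFull (fimp A A) :=
  .taut (by intro v; simp [fpeval, fimp]; tauto)

lemma hor_mono {A B C D : FullForm} (h1 : HilbFull (fimp A B)) (h2 : HilbFull (fimp C D)) :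
    HilbFull (fimp (.or A C) (.or B D)) :=
  hmp2 (by intro v; simp [fpeval, fimp]; tauto) h1 h2

lemma hand_mono {A B C D : FullForm} (h1 : HilbFull (fimp A B)) (h2 : HilbFull (fimp C D)) :
    HilbFull (fimp (fand A C) (fand B D)) :=
  hmp2 (by intro v; simp [fpeval, fimp, fand]; tauto) h1 h2

/-! Game monotonicity: `GMono γ₁ γ₂` says every diamond implication holds. -/

def GMono (γ₁ γ₂ : FullGame) : Prop :=
  ∀ φ : FullForm, HilbFull (fimp (.dia γ₁ φ) (.dia γ₂ φ))

lemma gm_compL {γ₁ γ₂ δ : FullGame} (h : GMono γ₁ γ₂) : GMono (.comp γ₁ δ) (.comp γ₂ δ) :=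
  fun φ => himp_trans (iffl .axComp) (himp_trans (h (.dia δ φ)) (iffr .axComp))

lemma gm_compR {δ₁ δ₂ γ : FullGame} (h : GMono δ₁ δ₂) : GMono (.comp γ δ₁) (.comp γ δ₂) :=
  fun φ => himp_trans (iffl .axComp) (himp_trans (.mon γ (h φ)) (iffr .axComp))

lemma gm_chaL {γ₁ γ₂ δ : FullGame} (h : GMono γ₁ γ₂) : GMono (.cha γ₁ δ) (.cha γ₂ δ) :=
  fun φ => himp_trans (iffl .axCha) (himp_trans (hor_mono (h φ) (himp_id _)) (iffr .axCha))

lemma gm_chaR {δ₁ δ₂ γ : FullGame} (h : GMono δ₁ δ₂) : GMono (.cha γ δ₁) (.cha γ δ₂) :=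
  fun φ => himp_trans (iffl .axCha) (himp_trans (hor_mono (himp_id _) (h φ)) (iffr .axCha))

lemma gm_chdL {γ₁ γ₂ δ : FullGame} (h : GMono γ₁ γ₂) : GMono (.chd γ₁ δ) (.chd γ₂ δ) :=
  fun φ => himp_trans (iffl .axChd) (himp_trans (hand_mono (h φ) (himp_id _)) (iffr .axChd))

lemma gm_chdR {δ₁ δ₂ γ : FullGame} (h : GMono δ₁ δ₂) : GMono (.chd γ δ₁) (.chd γ δ₂) :=
  fun φ => himp_trans (iffl .axChd) (himp_trans (hand_mono (himp_id _) (h φ)) (iffr .axChd))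

lemma gm_star {γ₁ γ₂ : FullGame} (h : GMono γ₁ γ₂) : GMono (.star γ₁) (.star γ₂) := by
  intro φ
  -- ⟨γ₂⟩⟨γ₂*⟩φ → ⟨γ₂*⟩φ
  have step2 : HilbFull (fimp (.dia γ₂ (.dia (.star γ₂) φ)) (.dia (.star γ₂) φ)) :=
    himp_trans (.taut (by intro v; simp [fpeval, fimp]; tauto)) (iffr .axStar)
  have h1 : HilbFull (fimp (.dia γ₁ (.dia (.star γ₂) φ)) (.dia (.star γ₂) φ)) :=
    himp_trans (h _) step2
  have hbar : HilbFull (fimp (.dia (.star γ₁) (.dia (.star γ₂) φ)) (.dia (.star γ₂) φ)) :=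
    .barInd h1
  have hunf : HilbFull (fimp φ (.dia (.star γ₂) φ)) :=
    himp_trans (.taut (by intro v; simp [fpeval, fimp]; tauto)) (iffr .axStar)
  exact himp_trans (.mon (.star γ₁) hunf) hbar

lemma gm_cross {γ₁ γ₂ : FullGame} (h : GMono γ₁ γ₂) : GMono (.cross γ₁) (.cross γ₂) := by
  intro φ
  have h1 : HilbFull (fimp (.dia (.cross γ₁) φ) (.dia γ₂ (.dia (.cross γ₁) φ))) :=
    himp_trans (himp_trans (iffl .axCross)
      (.taut (by intro v; simp [fpeval, fimp, fand]; tauto))) (h _)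
  have hbar : HilbFull (fimp (.dia (.cross γ₁) φ) (.dia (.cross γ₂) (.dia (.cross γ₁) φ))) :=
    .barIndCross h1
  have hdown : HilbFull (fimp (.dia (.cross γ₁) φ) φ) :=
    himp_trans (iffl .axCross) (.taut (by intro v; simp [fpeval, fimp, fand]; tauto))
  exact himp_trans hbar (.mon (.cross γ₂) hdown)

lemma gm_test {ψ₁ ψ₂ : FullForm} (h : HilbFull (fimp ψ₁ ψ₂)) : GMono (.test ψ₁) (.test ψ₂) :=
  fun φ => himp_trans (iffl .axTest) (himp_trans (hand_mono h (himp_id φ)) (iffr .axTest))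

lemma gm_dtest {ψ₁ ψ₂ : FullForm} (h : HilbFull (fimp ψ₁ ψ₂)) : GMono (.dtest ψ₁) (.dtest ψ₂) :=
  fun φ => himp_trans (iffl .axDtest) (himp_trans (hor_mono h (himp_id φ)) (iffr .axDtest))

/-- Base case: `⟨δ⟩φ → ⟨χ! ; δ⟩φ`. -/
lemma gm_hole (δ : FullGame) (χ : FullForm) : GMono δ (.comp (.dtest χ) δ) := by
  intro φ
  have h1 : HilbFull (fimp (.dia δ φ) (.or χ (.dia δ φ))) :=
    .taut (by intro v; simp [fpeval, fimp]; tauto)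
  exact himp_trans h1 (himp_trans (iffr .axDtest) (iffr .axComp))

/-! Mutual induction on contexts. -/

mutual
lemma fctx_mono (c : FCtxG) (δ : GLGame) (χ : GLForm) :
    HilbFull (fimp (GLForm.toFull (c.fillG δ))
                   (GLForm.toFull (c.fillG (.comp (.dtest χ) δ)))) := by
  cases c with
  | orL c ψ => exact hor_mono (fctx_mono c δ χ) (himp_id _)
  | orR ψ c => exact hor_mono (himp_id _) (fctx_mono c δ χ)
  | andL c ψ => exact hand_mono (fctx_mono c δ χ) (himp_id _)
  | andR ψ c => exact hand_mono (himp_id _) (fctx_mono c δ χ)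
  | diaG c φ => exact gctx_mono c δ χ (GLForm.toFull φ)
  | diaF γ c => exact .mon (GLGame.toFull γ) (fctx_mono c δ χ)

lemma gctx_mono (c : GCtxG) (δ : GLGame) (χ : GLForm) :
    GMono (GLGame.toFull (c.fillG δ)) (GLGame.toFull (c.fillG (.comp (.dtest χ) δ))) := by
  cases c with
  | hole => exact gm_hole (GLGame.toFull δ) (GLForm.toFull χ)
  | compL c δ' => exact gm_compL (gctx_mono c δ χ)
  | compR γ c => exact gm_compR (gctx_mono c δ χ)
  | chaL c δ' => exact gm_chaL (gctx_mono c δ χ)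
  | chaR γ c => exact gm_chaR (gctx_mono c δ χ)
  | chdL c δ' => exact gm_chdL (gctx_mono c δ χ)
  | chdR γ c => exact gm_chdR (gctx_mono c δ χ)
  | star c => exact gm_star (gctx_mono c δ χ)
  | cross c => exact gm_cross (gctx_mono c δ χ)
  | test c => exact gm_test (fctx_mono c δ χ)
  | dtest c => exact gm_dtest (fctx_mono c δ χ)
end

/-- Derivability of the deep game-monotonicity principle in
    `HilbFull`: for every `L_NF`-formula context `ψ(−)` with a unique
    game-position hole, every game `δ ∈ G_NF` and every formula `χ ∈ L_NF`,
    `HilbFull ⊢ ψ(δ) → ψ(χ! ; δ)` (formulas viewed in `L_Full` via the inclusion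
    of `L_NF` into `L_Full`). -/
theorem deep_game_monotonicity_derivable (c : FCtxG) (δ : GLGame) (χ : GLForm) :
    HilbFull (fimp (GLForm.toFull (c.fillG δ))
                   (GLForm.toFull (c.fillG (.comp (.dtest χ) δ)))) := by
  exact fctx_mono c δ χ
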